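/- Define φ on Dyck paths D = P Q R (with P, Q, R as in the decomposition, and Q with prime decomposition n_0 Q_1 n_1 ⋯ n_k Q_k) by: (1) if n_1 ≠ ∅, φ(D) = P Q_1 n_1 ⋯ n_k Q_k n_0 R. Then in case (1), φ(D) is a Dyck path of the same semilength with returns(φ(D)) = returns(D) + 1 and ldr(φ(D)) = ldr(D) + 1. -/

import Mathlib

/-!
Dyck paths are encoded as lists of booleans: `true` is a north step `(0,1)`,
`false` is an east step `(1,0)`.  A Dyck path of semilength `n` goes from
`(0,0)` to `(n,n)` staying weakly above the diagonal `y = x`.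
-/

/-- `D` is a Dyck word: every prefix has at least as many north steps as east
steps, and the total numbers agree. -/
def isDyck (D : List Bool) : Bool :=
  ((List.range (D.length + 1)).all fun k =>
    (D.take k).count false ≤ (D.take k).count true) &&
  (D.count true == D.count false)

/-- The (finite) set of Dyck paths of semilength `n`. -/
def dyckPaths (n : ℕ) : Finset (List Bool) :=
  ((List.replicate n true ++ List.replicate n false).permutations.filter isDyck).toFinset

/-- The number of returns: east steps ending on the diagonal `y = x`. -/
def returns (D : List Bool) : ℕ :=
  ((List.range D.length).filter fun i =>
    (D[i]? == some false) &&
    ((D.take (i + 1)).count true == (D.take (i + 1)).count false)).length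

/-- `ldr D`: the `y`-coordinate of the midpoint of the last double rise
(last pair of consecutive north steps), `0` if there is no double rise. -/
def ldr (D : List Bool) : ℕ :=
  match ((List.range D.length).filter fun i =>
      (D[i]? == some true) && (D[i+1]? == some true)).getLast? with
  | some i => (D.take (i + 1)).count true
  | none => 0

/-- The set of `x`-coordinates (plus 1) of the north steps of `D`. -/
def rises (D : List Bool) : Finset ℕ :=
  (((List.range D.length).filter fun i => D[i]? == some true).map
    fun i => (D.take i).count false + 1).toFinset

/-- The multiset of `x`-coordinates (plus 1) of the north steps of `D`. -/
def risesM (D : List Bool) : Multiset ℕ :=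
  ↑(((List.range D.length).filter fun i => D[i]? == some true).map
    fun i => (D.take i).count false + 1)

/-- `D` ends with a single east step: its last maximal run of east steps has
length one, i.e. `D` ends with a north step followed by one east step. -/
def EndsSingleEast (D : List Bool) : Prop :=
  ∃ P, D = P ++ [true, false]

/-- `R` contains only single rises: no two consecutive north steps. -/
def SingleRises (R : List Bool) : Prop :=
  ∀ i, ¬ (R[i]? = some true ∧ R[i+1]? = some true)

/-- A prime Dyck path: a Dyck path whose only return is its final east step. -/
def IsPrimeDyck (Q : List Bool) : Prop :=
  isDyck Q = true ∧ Q ≠ [] ∧ returns Q = 1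

/-- Concatenation `n₀ Q₁ n₁ Q₂ ⋯` of runs of north steps and paths, encoded as a
list of pairs `(nᵢ₋₁, Qᵢ)`. -/
def primeBlocks (l : List (ℕ × List Bool)) : List Bool :=
  (l.map fun p => List.replicate p.1 true ++ p.2).flatten

-- ### helpers

abbrev tc (L : List Bool) : ℕ := L.count true
abbrev fc (L : List Bool) : ℕ := L.count false

def Good (L : List Bool) : Prop := ∀ k, fc (L.take k) ≤ tc (L.take k)

lemma tc_add_fc (L : List Bool) : tc L + fc L = L.length := by
  induction L with
  | nil => rfl
  | cons a t ih =>
    simp only [tc, fc] at ih ⊢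
    cases a <;> simp [List.count_cons] <;> omega

lemma isDyck_iff (L : List Bool) : isDyck L = true ↔ Good L ∧ tc L = fc L := by
  unfold isDyck
  rw [Bool.and_eq_true, List.all_eq_true, beq_iff_eq]
  constructor
  · rintro ⟨h1, h2⟩
    refine ⟨fun k => ?_, h2⟩
    rcases le_or_gt k L.length with hk | hk
    · have := h1 k (List.mem_range.2 (by omega))
      simpa using this
    · rw [List.take_of_length_le (le_of_lt hk)]
      exact le_of_eq h2.symm
  · rintro ⟨h1, h2⟩
    refine ⟨fun k _ => ?_, h2⟩
    simpa using h1 k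

lemma Good.append {A B : List Bool} (hA : Good A) (hB : Good B) : Good (A ++ B) := by
  intro k
  rw [List.take_append]
  simp only [tc, fc, List.count_append]
  exact Nat.add_le_add (hA k) (hB _)

lemma Good.le {A : List Bool} (hA : Good A) : fc A ≤ tc A := by
  have := hA A.length
  simpa using this

lemma good_replicate_true (n : ℕ) : Good (List.replicate n true) := by
  intro k
  rw [List.take_replicate]
  simp [tc, fc, List.count_replicate]

-- last step of a balanced good nonempty list is false
lemma getLast_false {L : List Bool} (hg : Good L) (hb : tc L = fc L) (hne : L ≠ []) :
    L.getLast? = some false := by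
  rcases List.eq_nil_or_concat L with rfl | ⟨M, b, rfl⟩
  · exact absurd rfl hne
  · rw [List.concat_eq_append] at *
    cases b
    · exact List.getLast?_concat
    · exfalso
      have h1 : fc M ≤ tc M := by
        have := hg M.length
        rwa [List.take_left] at this
      simp only [tc, fc, List.count_append, List.count_singleton] at hb h1
      simp at hb
      omega

lemma filter_range_singleton {n : ℕ} {p : ℕ → Bool} {c : ℕ} (hc : c < n) (hpc : p c = true)
    (hmax : ∀ i, i < n → p i = true → i = c) :
    (List.range n).filter p = [c] := by
  set l := (List.range n).filter p with hl
  have h1 : ∀ x ∈ l, x = c := by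
    intro x hx
    rw [hl, List.mem_filter, List.mem_range] at hx
    exact hmax x hx.1 hx.2
  have h2 : c ∈ l := by
    rw [hl, List.mem_filter]
    exact ⟨List.mem_range.2 hc, hpc⟩
  have hnd : l.Nodup := (List.nodup_range).filter p
  have hrep : l = List.replicate l.length c := List.eq_replicate_length.mpr h1
  have hle : l.length ≤ 1 := by
    rw [hrep] at hnd
    simpa using hnd
  have hge : 0 < l.length := List.length_pos_iff.2 (List.ne_nil_of_mem h2)
  have : l.length = 1 := by omega
  rw [hrep, this]
  rfl

lemma filter_range_getLast {n : ℕ} {p : ℕ → Bool} {c : ℕ} (hc : c < n) (hpc : p c = true)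
    (hmax : ∀ i, c < i → p i = false) :
    ((List.range n).filter p).getLast? = some c := by
  obtain ⟨m, rfl⟩ : ∃ m, n = (c + 1) + m := ⟨n - (c + 1), by omega⟩
  rw [List.range_add, List.filter_append, List.range_succ, List.filter_append]
  have h1 : List.filter p [c] = [c] := by simp [hpc]
  have h2 : ((List.range m).map ((c+1) + ·)).filter p = [] := by
    rw [List.filter_eq_nil_iff]
    intro a ha
    simp only [List.mem_map] at ha
    obtain ⟨x, _, rfl⟩ := ha
    have := hmax (c + 1 + x) (by omega)
    simp [this]
  rw [h1, h2, List.append_nil, List.getLast?_append]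
  rfl

lemma length_filter_congr {l : List ℕ} {p q : ℕ → Bool} (h : ∀ i ∈ l, p i = q i) :
    (l.filter p).length = (l.filter q).length := by
  rw [List.filter_congr h]

lemma returns_append (A B : List Bool) (hA : tc A = fc A) :
    returns (A ++ B) = returns A + returns B := by
  unfold returns
  rw [List.length_append, List.range_add, List.filter_append, List.length_append,
    List.filter_map, List.length_map]
  congr 1
  · apply length_filter_congr
    intro i hi
    rw [List.mem_range] at hi
    have h1 : (A ++ B)[i]? = A[i]? := List.getElem?_append_left hi
    have h2 : (A ++ B).take (i+1) = A.take (i+1) := by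
      rw [List.take_append]
      have : i + 1 - A.length = 0 := by omega
      simp [this]
    simp only [h1, h2]
  · apply length_filter_congr
    intro i hi
    rw [List.mem_range] at hi
    have h1 : (A ++ B)[A.length + i]? = B[i]? := by
      rw [List.getElem?_append_right (Nat.le_add_right _ _)]
      congr 1
      omega
    have h2 : (A ++ B).take (A.length + i + 1) = A ++ B.take (i + 1) := by
      rw [List.take_append, List.take_of_length_le (by omega)]
      congr 2
      omega
    simp only [Function.comp, h1, h2, List.count_append]
    congr 1
    rw [Bool.eq_iff_iff, beq_iff_eq, beq_iff_eq]
    simp only [tc, fc] at hA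
    omega

lemma ldr_concat (A S : List Bool) (hA : A.getLast? = some true) (hS : S.head? = some true)
    (hnoDR : SingleRises S) :
    ldr (A ++ S) = tc A := by
  have hAne : A ≠ [] := by intro h; rw [h] at hA; simp at hA
  have hAl : 1 ≤ A.length := List.length_pos_iff.2 hAne
  have hSne : S ≠ [] := by intro h; rw [h] at hS; simp at hS
  have hSl : 1 ≤ S.length := List.length_pos_iff.2 hSne
  have hgA : (A ++ S)[A.length - 1]? = some true := by
    rw [List.getElem?_append_left (by omega), ← List.getLast?_eq_getElem?]
    exact hA
  have hgS : (A ++ S)[A.length]? = some true := by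
    rw [List.getElem?_append_right (le_refl _), Nat.sub_self, ← List.head?_eq_getElem?]
    exact hS
  have hfilter : ((List.range (A ++ S).length).filter fun i =>
      ((A ++ S)[i]? == some true) && ((A ++ S)[i+1]? == some true)).getLast? =
      some (A.length - 1) := by
    apply filter_range_getLast
    · rw [List.length_append]; omega
    · have : A.length - 1 + 1 = A.length := by omega
      rw [this, hgA, hgS]
      simp
    · intro i hi
      have hi' : A.length ≤ i := by omega
      rw [Bool.eq_false_iff]
      intro hcon
      rw [Bool.and_eq_true, beq_iff_eq, beq_iff_eq] at hcon
      obtain ⟨c1, c2⟩ := hcon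
      rw [List.getElem?_append_right hi'] at c1
      rw [List.getElem?_append_right (by omega)] at c2
      have : i + 1 - A.length = i - A.length + 1 := by omega
      rw [this] at c2
      exact hnoDR (i - A.length) ⟨c1, c2⟩
  unfold ldr
  rw [hfilter]
  simp only []
  have : A.length - 1 + 1 = A.length := by omega
  rw [this, List.take_left]

lemma singleRises_TFR {a : ℕ} (ha : 1 ≤ a) {R : List Bool} (hR : SingleRises R) :
    SingleRises (true :: (List.replicate a false ++ R)) := by
  rintro i ⟨h1, h2⟩
  match i, h1, h2 with
  | 0, h1, h2 =>
    rw [show (1:ℕ) = 0 + 1 from rfl, List.getElem?_cons_succ,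
      List.getElem?_append_left (by simp; omega), List.getElem?_replicate] at h2
    simp [Nat.lt_of_lt_of_le Nat.zero_lt_one ha] at h2
  | (i+1), h1, h2 =>
    rw [List.getElem?_cons_succ] at h1 h2
    rcases Nat.lt_or_ge i a with hia | hia
    · rw [List.getElem?_append_left (by simpa using hia), List.getElem?_replicate] at h1
      simp [hia] at h1
    · rw [List.getElem?_append_right (by simpa using hia)] at h1
      rw [List.getElem?_append_right (by simp; omega)] at h2
      rw [List.length_replicate] at h1 h2
      have : i + 1 - a = i - a + 1 := by omega
      rw [this] at h2
      exact hR (i - a) ⟨h1, h2⟩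

lemma last_true_decomp (L : List Bool) (hl : L.getLast? = some false) (h2 : 2 ≤ tc L) :
    ∃ E a, L = E ++ [true] ++ List.replicate a false ∧ 1 ≤ a ∧ E ≠ [] := by
  induction L using List.reverseRecOn with
  | nil => simp at hl
  | append_singleton M x ih =>
    rw [List.getLast?_concat] at hl
    obtain rfl : x = false := by simpa using hl.symm
    have h2' : 2 ≤ tc M := by
      simpa [tc, List.count_append] using h2
    have hMne : M ≠ [] := by
      intro h; rw [h] at h2'; simp [tc] at h2'
    obtain ⟨b, hb⟩ : ∃ b, M.getLast? = some b := by
      rcases List.eq_nil_or_concat M with rfl | ⟨M', y, rfl⟩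
      · exact absurd rfl hMne
      · exact ⟨y, by rw [List.concat_eq_append, List.getLast?_concat]⟩
    cases b with
    | true =>
      obtain ⟨M', rfl⟩ := List.getLast?_eq_some_iff.mp hb
      refine ⟨M', 1, by simp, le_refl _, ?_⟩
      intro h
      rw [h] at h2'
      simp [tc] at h2'
    | false =>
      obtain ⟨E, a, rfl, ha, hE⟩ := ih hb h2'
      refine ⟨E, a + 1, ?_, by omega, hE⟩
      rw [List.replicate_add]
      simp

lemma prime_strict {L : List Bool} (hg : Good L) (hb : tc L = fc L) (hr : returns L = 1) :
    ∀ k, 1 ≤ k → k < L.length → fc (L.take k) + 1 ≤ tc (L.take k) := by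
  intro k hk1 hk2
  by_contra hcon
  have heq : tc (L.take k) = fc (L.take k) := by
    have := hg k
    simp only [tc, fc] at *
    omega
  obtain ⟨i, rfl⟩ : ∃ i, k = i + 1 := ⟨k - 1, by omega⟩
  have hil : i < L.length := by omega
  have hgi : L[i]? = some L[i] := List.getElem?_eq_getElem hil
  have htake : L.take (i+1) = L.take i ++ [L[i]] := by
    rw [List.take_succ, hgi]; rfl
  cases hLi : L[i] with
  | true =>
    have h3 := hg i
    rw [htake, hLi] at heq
    simp only [tc, fc, List.count_append, List.count_singleton] at heq h3
    simp at heq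
    omega
  | false =>
    have hne : L ≠ [] := by intro h; rw [h] at hil; simp at hil
    have hlast : L[L.length - 1]? = some false := by
      rw [← List.getLast?_eq_getElem?]; exact getLast_false hg hb hne
    unfold returns at hr
    have hmem1 : i ∈ (List.range L.length).filter fun j => (L[j]? == some false) &&
        ((L.take (j+1)).count true == (L.take (j+1)).count false) := by
      rw [List.mem_filter, List.mem_range]
      refine ⟨hil, ?_⟩
      simp only [tc, fc] at heq
      simp [hgi, hLi, heq]
    have hmem2 : (L.length - 1) ∈ (List.range L.length).filter fun j => (L[j]? == some false) &&
        ((L.take (j+1)).count true == (L.take (j+1)).count false) := by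
      rw [List.mem_filter, List.mem_range]
      refine ⟨by omega, ?_⟩
      have h4 : L.length - 1 + 1 = L.length := by omega
      simp only [h4, List.take_length, hlast]
      simp only [tc, fc] at hb
      simp [hb]
    obtain ⟨x, hx⟩ := List.length_eq_one_iff.mp hr
    rw [hx] at hmem1 hmem2
    simp at hmem1 hmem2
    omega

lemma primeBlocks_cons (n : ℕ) (Q : List Bool) (t : List (ℕ × List Bool)) :
    primeBlocks ((n, Q) :: t) = List.replicate n true ++ Q ++ primeBlocks t := by
  simp [primeBlocks, List.append_assoc]

lemma good_primeBlocks {l : List (ℕ × List Bool)} (h : ∀ p ∈ l, Good p.2) :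
    Good (primeBlocks l) := by
  induction l with
  | nil => intro k; simp [primeBlocks]
  | cons p t ih =>
    obtain ⟨n, Q⟩ := p
    rw [primeBlocks_cons]
    exact ((good_replicate_true n).append (h (n, Q) (by simp))).append
      (ih fun q hq => h q (by simp [hq]))

lemma balance_primeBlocks {l : List (ℕ × List Bool)} (h : ∀ p ∈ l, tc p.2 = fc p.2) :
    tc (primeBlocks l) = (l.map Prod.fst).sum + fc (primeBlocks l) := by
  induction l with
  | nil => simp [primeBlocks, tc, fc]
  | cons p t ih =>
    obtain ⟨n, Q⟩ := p
    rw [primeBlocks_cons]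
    have h1 := h (n, Q) (by simp)
    have h2 := ih fun q hq => h q (by simp [hq])
    simp only [tc, fc, List.count_append, List.count_replicate] at h1 h2 ⊢
    simp at *
    omega

lemma pos_primeBlocks {n1 : ℕ} {Q2 : List Bool} {t : List (ℕ × List Bool)} (hn1 : 1 ≤ n1)
    (hQ : Good Q2) (ht : ∀ p ∈ t, Good p.2) :
    ∀ k, 1 ≤ k → fc ((primeBlocks ((n1, Q2) :: t)).take k) + 1 ≤
      tc ((primeBlocks ((n1, Q2) :: t)).take k) := by
  intro k hk
  rw [primeBlocks_cons, List.append_assoc, List.take_append]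
  have hgood := (hQ.append (good_primeBlocks ht)) (k - (List.replicate n1 true).length)
  simp only [tc, fc, List.count_append] at hgood ⊢
  rw [List.take_replicate]
  simp only [List.count_replicate]
  have hmin : 1 ≤ min k n1 := le_min hk hn1
  rw [List.length_replicate] at hgood
  simp
  omega

lemma Good.of_append_left {A B : List Bool} (h : Good (A ++ B)) : Good A := by
  intro k
  rcases le_or_gt k A.length with hk | hk
  · have h2 := h k
    rw [List.take_append] at h2
    have h3 : k - A.length = 0 := by omega
    rw [h3] at h2
    simpa using h2
  · rw [List.take_of_length_le (by omega)]
    have h2 := h A.length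
    rw [List.take_append] at h2
    have h3 : A.length - A.length = 0 := by omega
    rw [h3] at h2
    simp only [List.take_length, List.take_zero, List.append_nil] at h2
    exact h2

/-- Case (1) of the map `φ`: if `n₁ ≠ ∅`, then
`φ(D) = P Q₁ n₁ ⋯ nₖ Qₖ n₀ R` is a Dyck path of the same semilength with one
more return and `ldr` one larger. -/
theorem stmt6 (n : ℕ) (D P Q R : List Bool) (n0 : ℕ) (Q1 : List Bool)
    (rest : List (ℕ × List Bool))
    (hD : D ∈ dyckPaths n) (h1 : ¬ EndsSingleEast D) (h2 : ldr D < n - 1)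
    (hsplit : D = P ++ Q ++ R)
    (hR : SingleRises R) (hRh : R = [] ∨ R.head? = some true)
    (hQl : Q.getLast? = some false)
    (hprime : IsPrimeDyck (Q ++ R))
    (hmax : ∀ P' Q' R' : List Bool, D = P' ++ Q' ++ R' → SingleRises R' →
      (R' = [] ∨ R'.head? = some true) → Q'.getLast? = some false →
      IsPrimeDyck (Q' ++ R') → R'.length ≤ R.length)
    (hdecomp : Q = primeBlocks ((n0, Q1) :: rest))
    (hQ1 : IsPrimeDyck Q1) (hprimes : ∀ p ∈ rest, IsPrimeDyck p.2)
    (hn0 : 1 ≤ n0)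
    (hcase : rest ≠ [] ∧ 1 ≤ (rest.headI).1) :
    (P ++ Q1 ++ primeBlocks rest ++ List.replicate n0 true ++ R) ∈ dyckPaths n ∧
    returns (P ++ Q1 ++ primeBlocks rest ++ List.replicate n0 true ++ R) =
      returns D + 1 ∧
    ldr (P ++ Q1 ++ primeBlocks rest ++ List.replicate n0 true ++ R) =
      ldr D + 1 := by
  -- notation
  obtain ⟨hrestne, hn1⟩ := hcase
  obtain ⟨⟨n1, Q2⟩, t, rfl⟩ : ∃ p t, rest = p :: t := by
    rcases rest with _ | ⟨p, t⟩
    · exact absurd rfl hrestne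
    · exact ⟨p, t, rfl⟩
  simp only [List.headI] at hn1
  set B := primeBlocks ((n1, Q2) :: t) with hB
  set T := List.replicate n0 true with hT
  -- unpack Dyck path membership
  rw [dyckPaths, List.mem_toFinset, List.mem_filter, List.mem_permutations] at hD
  obtain ⟨hperm, hdyck⟩ := hD
  obtain ⟨hgD, hbD⟩ := (isDyck_iff D).mp hdyck
  obtain ⟨hQRd, hQRne, hQRret⟩ := hprime
  obtain ⟨hgQR, hbQR⟩ := (isDyck_iff _).mp hQRd
  obtain ⟨hQ1d, hQ1ne, hQ1ret⟩ := hQ1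
  obtain ⟨hgQ1, hbQ1⟩ := (isDyck_iff _).mp hQ1d
  have hgB : Good B := good_primeBlocks fun p hp => ((isDyck_iff _).mp (hprimes p hp).1).1
  have hbB : tc B = ((((n1, Q2) :: t)).map Prod.fst).sum + fc B :=
    balance_primeBlocks fun p hp => ((isDyck_iff _).mp (hprimes p hp).1).2
  have hgP : Good P := by
    rw [hsplit] at hgD
    exact hgD.of_append_left.of_append_left
  have hQshape : Q = T ++ Q1 ++ B := by
    rw [hdecomp, primeBlocks_cons, hB, hT]
  -- count facts
  have hTt : T.count true = n0 := by rw [hT]; simp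
  have hTf : T.count false = 0 := by rw [hT]; simp [List.count_replicate]
  have hbP : tc P = fc P := by
    rw [hsplit] at hbD
    simp only [tc, fc, List.count_append] at hbD hbQR ⊢
    omega
  have htcQ1 : 1 ≤ tc Q1 := by
    have h3 := tc_add_fc Q1
    have h4 : 0 < Q1.length := List.length_pos_iff.2 hQ1ne
    simp only [tc, fc] at *
    omega
  have hSpos : 1 ≤ ((((n1, Q2) :: t).map Prod.fst).sum) := by
    simp
    omega
  have hbQ : tc Q = n0 + tc Q1 + tc B ∧ fc Q = fc Q1 + fc B := by
    rw [hQshape]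
    unfold tc fc
    simp only [List.count_append, hTt, hTf]
    exact ⟨trivial, by omega⟩
  have hRne : R ≠ [] := by
    intro h
    rw [h, List.append_nil] at hbQR
    unfold tc fc at hbQ hbQR hbQ1 hbB
    omega
  have hRhead : R.head? = some true := hRh.resolve_left hRne
  have hRlast : R.getLast? = some false := by
    have h3 := getLast_false hgQR hbQR (by simp [hRne])
    rwa [List.getLast?_append_of_ne_nil _ hRne] at h3
  have hTlen : T.length = n0 := by rw [hT]; simp
  have hTne : T ≠ [] := by
    rw [hT]
    simp only [ne_eq, List.replicate_eq_nil_iff]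
    omega
  obtain ⟨hbQt, hbQf⟩ := hbQ
  unfold tc at hbQt htcQ1
  unfold fc at hbQf
  have hbQRc := hbQR
  unfold tc fc at hbQ1 hbB hbP hbQRc
  simp only [List.count_append] at hbQRc
  have hpos : ∀ k, 1 ≤ k → fc (B.take k) + 1 ≤ tc (B.take k) :=
    pos_primeBlocks hn1 ((isDyck_iff _).mp (hprimes (n1, Q2) (by simp)).1).1
      (fun p hp => ((isDyck_iff _).mp (hprimes p (by simp [hp])).1).1)
  have hgW : Good (P ++ Q1 ++ B ++ T) :=
    ((hgP.append hgQ1).append hgB).append (good_replicate_true n0)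
  have hRlen : 1 ≤ R.length := List.length_pos_iff.2 hRne
  -- the new path is a Dyck path
  have hXlen : (B ++ T ++ R).length = B.length + n0 + R.length := by
    simp only [List.length_append, hTlen]
  -- returns of the new tail
  have hX : returns (B ++ T ++ R) = 1 := by
    have hgl : (B ++ T ++ R)[(B ++ T ++ R).length - 1]? = some false := by
      rw [← List.getLast?_eq_getElem?, List.getLast?_append_of_ne_nil _ hRne]
      exact hRlast
    have hfil : ((List.range (B ++ T ++ R).length).filter fun i =>
        ((B ++ T ++ R)[i]? == some false) &&
        (((B ++ T ++ R).take (i+1)).count true == ((B ++ T ++ R).take (i+1)).count false)) =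
        [(B ++ T ++ R).length - 1] := by
      apply filter_range_singleton
      · omega
      · have ht : (B ++ T ++ R).take ((B ++ T ++ R).length - 1 + 1) = (B ++ T) ++ R := by
          rw [show (B ++ T ++ R).length - 1 + 1 = (B ++ T ++ R).length by omega, List.take_length]
        rw [hgl, ht]
        simp only [List.count_append, Bool.and_eq_true, beq_iff_eq]
        refine ⟨trivial, ?_⟩
        omega
      · intro i hilen hpi
        by_contra hne
        rw [Bool.and_eq_true, beq_iff_eq, beq_iff_eq] at hpi
        obtain ⟨hp1, hp2⟩ := hpi
        have hki : i + 1 < (B ++ T ++ R).length := by omega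
        rcases le_or_gt (i+1) B.length with hk | hk
        · have htk : (B ++ T ++ R).take (i+1) = B.take (i+1) := by
            rw [List.take_append, List.take_append]
            have e1 : i + 1 - B.length = 0 := by omega
            have e2 : i + 1 - (B ++ T).length = 0 := by
              simp only [List.length_append]
              omega
            rw [e1, e2]
            simp
          rw [htk] at hp2
          have := hpos (i+1) (by omega)
          unfold tc fc at this
          omega
        · rcases le_or_gt (i+1) (B.length + n0) with hk2 | hk2
          · have : (B ++ T ++ R)[i]? = some true := by
              rw [List.getElem?_append_left (by simp only [List.length_append]; omega),
                List.getElem?_append_right (by omega), hT, List.getElem?_replicate,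
                if_pos (by omega : i - B.length < n0)]
            rw [hp1] at this
            simp at this
          · have hj : 1 ≤ i + 1 - (B.length + n0) := by omega
            have hjR : i + 1 - (B.length + n0) < R.length := by omega
            have htk : (B ++ T ++ R).take (i+1) = (B ++ T) ++ R.take (i + 1 - (B.length + n0)) := by
              rw [List.take_append,
                List.take_of_length_le (by simp only [List.length_append, hTlen]; omega)]
              congr 1
              congr 1
              simp only [List.length_append, hTlen]
            rw [htk] at hp2
            have hps := prime_strict hgQR hbQR hQRret (Q.length + (i + 1 - (B.length + n0)))
              (by omega) (by simp only [List.length_append]; omega)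
            have htk2 : (Q ++ R).take (Q.length + (i + 1 - (B.length + n0))) =
                Q ++ R.take (i + 1 - (B.length + n0)) := by
              rw [List.take_append, List.take_of_length_le (by omega)]
              congr 1
              congr 1
              omega
            rw [htk2] at hps
            unfold tc fc at hps
            simp only [List.count_append] at hps hp2
            omega
    unfold returns
    rw [hfil]
    rfl
  refine ⟨?_, ?_, ?_⟩
  · -- membership
    rw [dyckPaths, List.mem_toFinset, List.mem_filter, List.mem_permutations]
    have htD : D.count true = n := by
      have := hperm.count_eq true
      simpa [List.count_replicate] using this
    have hfD : D.count false = n := by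
      have := hperm.count_eq false
      simpa [List.count_replicate] using this
    rw [hsplit, hQshape] at htD hfD
    simp only [List.count_append] at htD hfD
    constructor
    · rw [List.perm_iff_count]
      intro b
      cases b
      · simp only [List.count_append, List.count_replicate]
        simp
        omega
      · simp only [List.count_append, List.count_replicate]
        simp
        omega
    · rw [isDyck_iff]
      constructor
      · intro k
        rw [List.take_append]
        rcases le_or_gt k (P ++ Q1 ++ B ++ T).length with hk | hk
        · have h3 : k - (P ++ Q1 ++ B ++ T).length = 0 := by omega
          rw [h3]
          simp only [List.take_zero, List.append_nil]
          exact hgW k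
        · rw [List.take_of_length_le (le_of_lt hk)]
          have h4 := hgD ((P ++ Q).length + (k - (P ++ Q1 ++ B ++ T).length))
          rw [hsplit, List.take_append,
            List.take_of_length_le (by omega)] at h4
          rw [show (P ++ Q).length + (k - (P ++ Q1 ++ B ++ T).length) - (P ++ Q).length =
            k - (P ++ Q1 ++ B ++ T).length by omega] at h4
          unfold tc fc at h4 ⊢
          simp only [List.count_append] at h4 ⊢
          omega
      · unfold tc fc
        simp only [List.count_append]
        omega
  · -- returns
    have hφ : P ++ Q1 ++ B ++ T ++ R = P ++ (Q1 ++ (B ++ T ++ R)) := by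
      simp [List.append_assoc]
    have hD' : D = P ++ (Q ++ R) := by rw [hsplit, List.append_assoc]
    rw [hφ, returns_append P (Q1 ++ (B ++ T ++ R)) hbP,
      returns_append Q1 (B ++ T ++ R) hbQ1, hX,
      hD', returns_append P (Q ++ R) hbP, hQRret, hQ1ret]
  · -- ldr
    have h2Q : 2 ≤ Q.count true := by omega
    obtain ⟨E, a, hQE, ha, hEne⟩ := last_true_decomp Q hQl (by unfold tc; omega)
    obtain ⟨b, hEb⟩ : ∃ b, E.getLast? = some b := by
      rcases List.eq_nil_or_concat E with rfl | ⟨E', y, rfl⟩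
      · exact absurd rfl hEne
      · exact ⟨y, by rw [List.concat_eq_append, List.getLast?_concat]⟩
    cases b with
    | false =>
      exfalso
      have hD' : D = P ++ E ++ (true :: (List.replicate a false ++ R)) := by
        rw [hsplit, hQE]
        simp [List.append_assoc]
      have hlen := hmax P E (true :: (List.replicate a false ++ R)) hD'
        (singleRises_TFR ha hR) (Or.inr rfl) hEb (by
          have he : E ++ (true :: (List.replicate a false ++ R)) = (Q ++ R) := by
            rw [hQE]
            simp [List.append_assoc]
          rw [he]
          exact ⟨hQRd, hQRne, hQRret⟩)
      simp only [List.length_cons, List.length_append, List.length_replicate] at hlen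
      omega
    | true =>
      have hD' : D = (P ++ E) ++ (true :: (List.replicate a false ++ R)) := by
        rw [hsplit, hQE]
        simp [List.append_assoc]
      have hldrD : ldr D = tc (P ++ E) := by
        rw [hD']
        exact ldr_concat _ _ (by rw [List.getLast?_append_of_ne_nil _ hEne]; exact hEb) rfl
          (singleRises_TFR ha hR)
      have hldrφ : ldr (P ++ Q1 ++ B ++ T ++ R) = tc (P ++ Q1 ++ B ++ T) := by
        apply ldr_concat _ _ _ hRhead hR
        rw [List.getLast?_append_of_ne_nil _ hTne, hT, List.getLast?_replicate,
          if_neg (by omega : ¬ n0 = 0)]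
      rw [hldrφ, hldrD]
      have htcE : Q.count true = E.count true + 1 := by
        rw [hQE]
        simp [List.count_append, List.count_replicate]
      unfold tc
      simp only [List.count_append, hTt]
      omega
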